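/- Let f, g₁, …, g_m be convex polynomials on ℝ^n with K = {x : gᵢ(x) ≤ 0, i = 1,…,m} nonempty, let x* be a minimizer of f over K, and let ε > 0. Then there exists δ > 0 such that f(x) + ε − f(x*) > 0 for all x ∈ K_δ := {x : gᵢ(x) ≤ δ, i = 1,…,m}. -/

import Mathlib

open Filter Polynomial Topology Set

lemma exists_line_poly {n : ℕ} (p : MvPolynomial (Fin n) ℝ) (y u : Fin n → ℝ) :
    ∃ P : Polynomial ℝ, ∀ t : ℝ, P.eval t = MvPolynomial.eval (y + t • u) p := by
  refine ⟨MvPolynomial.aeval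
    (fun i => Polynomial.C (y i) + Polynomial.C (u i) * Polynomial.X) p, fun t => ?_⟩
  have : (Polynomial.evalRingHom t) (MvPolynomial.eval₂ (algebraMap ℝ (Polynomial ℝ))
      (fun i => Polynomial.C (y i) + Polynomial.C (u i) * Polynomial.X) p)
      = MvPolynomial.eval₂ ((Polynomial.evalRingHom t).comp (algebraMap ℝ (Polynomial ℝ)))
        (fun i => (Polynomial.evalRingHom t) (Polynomial.C (y i) + Polynomial.C (u i) * Polynomial.X)) p :=
    MvPolynomial.eval₂_comp_left _ _ _ _
  rw [MvPolynomial.aeval_def]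
  show (Polynomial.evalRingHom t) _ = _
  rw [this]
  have h1 : ((Polynomial.evalRingHom t).comp (algebraMap ℝ (Polynomial ℝ))) = RingHom.id ℝ := by
    ext r; simp
  rw [h1]
  have h2 : (fun i => (Polynomial.evalRingHom t) (Polynomial.C (y i) + Polynomial.C (u i) * Polynomial.X))
      = fun i => (y + t • u) i := by
    funext i; simp [Pi.smul_apply, smul_eq_mul]; ring
  rw [h2]
  rfl

-- convexity along a line
lemma convexOn_line {n : ℕ} {g : (Fin n → ℝ) → ℝ} (hg : ConvexOn ℝ Set.univ g)
    (y u : Fin n → ℝ) : ConvexOn ℝ Set.univ (fun t : ℝ => g (y + t • u)) := by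
  refine ⟨convex_univ, fun t₁ _ t₂ _ a b ha hb hab => ?_⟩
  have key : y + (a * t₁ + b * t₂) • u = a • (y + t₁ • u) + b • (y + t₂ • u) := by
    rw [smul_add, smul_add, add_smul, mul_smul, mul_smul]
    rw [show a • y + a • t₁ • u + (b • y + b • t₂ • u)
        = (a • y + b • y) + (a • t₁ • u + b • t₂ • u) by abel, ← add_smul, hab, one_smul]
  simp only [smul_eq_mul]
  rw [key]
  exact hg.2 (Set.mem_univ _) (Set.mem_univ _) ha hb hab

-- an affine function ≤ another affine function everywhere implies slopes equal
lemma slope_eq_of_affine_le {a₁ b₁ a₂ b₂ : ℝ} (h : ∀ t : ℝ, a₁ * t + b₁ ≤ a₂ * t + b₂) :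
    a₁ = a₂ := by
  by_contra hne
  have hx : a₁ - a₂ ≠ 0 := sub_ne_zero.mpr hne
  have h' := h ((b₂ - b₁ + 1) / (a₁ - a₂))
  have key : (a₁ - a₂) * ((b₂ - b₁ + 1) / (a₁ - a₂)) = b₂ - b₁ + 1 := by field_simp
  nlinarith [h', key]

-- convex polynomial function bounded above on [0,∞) is affine
lemma poly_affine_of_convex_bddAbove (P : Polynomial ℝ)
    (hc : ConvexOn ℝ Set.univ fun t => P.eval t) (C : ℝ)
    (hb : ∀ t : ℝ, 0 ≤ t → P.eval t ≤ C) :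
    ∀ t : ℝ, P.eval t = (P.eval 1 - P.eval 0) * t + P.eval 0 := by
  have hdeg : P.natDegree ≤ 1 := by
    by_contra hd
    push_neg at hd
    have h2 : 2 ≤ P.natDegree := hd
    have hP0 : P ≠ 0 := fun h => by simp [h] at h2
    have hdeg2 : (1 : WithBot ℕ) < P.degree := by
      rw [Polynomial.degree_eq_natDegree hP0]
      exact_mod_cast h2
    have hdeg0 : 0 < P.degree := lt_trans (by norm_num) hdeg2
    rcases lt_trichotomy P.leadingCoeff 0 with hlt | heq | hgt
    · -- leading coeff negative : P - (affine lower bound) tends to -infty but is ≥ 0 on [1,∞)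
      set L : Polynomial ℝ := Polynomial.C (P.eval 1 - P.eval 0) * Polynomial.X
          + Polynomial.C (P.eval 0) with hL
      have hLdeg : L.degree ≤ 1 := Polynomial.degree_linear_le
      have hLP : L.degree < P.degree := lt_of_le_of_lt hLdeg hdeg2
      have hlow : ∀ t : ℝ, 1 ≤ t → L.eval t ≤ P.eval t := by
        intro t ht
        have h01 : (0:ℝ) ≤ 1 - 1/t := by
          have : 1/t ≤ 1 := by
            rw [div_le_one (by linarith)]; linarith
          linarith
        have h02 : (0:ℝ) ≤ 1/t := by positivity
        have hsum : (1 - 1/t) + 1/t = 1 := by ring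
        have hcomb := hc.2 (Set.mem_univ (0:ℝ)) (Set.mem_univ t) h01 h02 hsum
        simp only [smul_eq_mul, mul_zero, zero_add] at hcomb
        -- P.eval (1/t * t) ≤ (1-1/t) P.eval 0 + (1/t) P.eval t
        have ht0 : t ≠ 0 := by linarith
        rw [show (1/t) * t = 1 by field_simp] at hcomb
        have : t * P.eval 1 ≤ t * ((1 - 1/t) * P.eval 0 + 1/t * P.eval t) :=
          mul_le_mul_of_nonneg_left hcomb (by linarith)
        have hexp : t * ((1 - 1/t) * P.eval 0 + 1/t * P.eval t)
            = (t - 1) * P.eval 0 + P.eval t := by field_simp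
        rw [hexp] at this
        simp only [hL, Polynomial.eval_add, Polynomial.eval_mul, Polynomial.eval_C,
          Polynomial.eval_X]
        nlinarith
      have hRlead : (P - L).leadingCoeff = P.leadingCoeff := by
        rw [sub_eq_add_neg, add_comm]
        rw [Polynomial.leadingCoeff_add_of_degree_lt]
        rwa [Polynomial.degree_neg]
      have hRdeg : 0 < (P - L).degree := by
        rw [sub_eq_add_neg, add_comm]
        rw [Polynomial.degree_add_eq_right_of_degree_lt (by rwa [Polynomial.degree_neg])]
        exact hdeg0
      have htb := Polynomial.tendsto_atBot_of_leadingCoeff_nonpos (P - L) hRdeg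
        (le_of_lt (hRlead ▸ hlt))
      have hev : ∀ᶠ t in atTop, (P - L).eval t < 0 := htb.eventually (eventually_lt_atBot 0)
      rcases ((hev.and (eventually_ge_atTop (1:ℝ))).exists) with ⟨t, hneg, ht1⟩
      rw [Polynomial.eval_sub] at hneg
      linarith [hlow t ht1]
    · exact (Polynomial.leadingCoeff_ne_zero.mpr hP0) heq
    · have htt := Polynomial.tendsto_atTop_of_leadingCoeff_nonneg P hdeg0 (le_of_lt hgt)
      have hev : ∀ᶠ t in atTop, C < P.eval t := htt.eventually (eventually_gt_atTop C)
      rcases ((hev.and (eventually_ge_atTop (0:ℝ))).exists) with ⟨t, hgtC, ht0⟩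
      linarith [hb t ht0]
  -- now P is affine
  intro t
  conv_lhs => rw [Polynomial.eq_X_add_C_of_natDegree_le_one hdeg]
  have e0 : P.eval 0 = P.coeff 0 := by
    conv_lhs => rw [Polynomial.eq_X_add_C_of_natDegree_le_one hdeg]
    simp
  have e1 : P.eval 1 = P.coeff 1 + P.coeff 0 := by
    conv_lhs => rw [Polynomial.eq_X_add_C_of_natDegree_le_one hdeg]
    simp
  simp only [Polynomial.eval_add, Polynomial.eval_mul, Polynomial.eval_C, Polynomial.eval_X, e0, e1]
  ring

-- if convex continuous f is bounded above on a ray, it is nonincreasing in that direction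
lemma ray_mono {n : ℕ} {f : (Fin n → ℝ) → ℝ} (hfc : ConvexOn ℝ Set.univ f)
    (hcont : Continuous f) (a u : Fin n → ℝ) (C : ℝ)
    (hb : ∀ t : ℝ, 0 ≤ t → f (a + t • u) ≤ C) :
    ∀ (y : Fin n → ℝ) (s : ℝ), 0 ≤ s → f (y + s • u) ≤ f y := by
  intro y s hs
  rcases eq_or_lt_of_le hs with rfl | hs'
  · simp
  -- z j = (1-λ)•y + λ•(a + T•u), λ = 1/(j+1), T = s(j+1)
  have hzlim : Tendsto (fun j : ℕ => (y + s • u) + (1/(j+1 : ℝ)) • (a - y)) atTop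
      (𝓝 (y + s • u)) := by
    have h0 : Tendsto (fun j : ℕ => (1/(j+1 : ℝ)) • (a - y)) atTop (𝓝 ((0:ℝ) • (a - y))) :=
      (tendsto_one_div_add_atTop_nhds_zero_nat).smul_const (a - y)
    rw [zero_smul] at h0
    simpa using tendsto_const_nhds.add h0
  have hflim : Tendsto (fun j : ℕ => f ((y + s • u) + (1/(j+1 : ℝ)) • (a - y))) atTop
      (𝓝 (f (y + s • u))) := (hcont.tendsto _).comp hzlim
  have hrlim : Tendsto (fun j : ℕ => (1 - 1/(j+1 : ℝ)) * f y + (1/(j+1 : ℝ)) * C) atTop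
      (𝓝 (f y)) := by
    have h1 : Tendsto (fun j : ℕ => (1/(j+1 : ℝ))) atTop (𝓝 0) :=
      tendsto_one_div_add_atTop_nhds_zero_nat
    have hA : Tendsto (fun j : ℕ => (1 - 1/(j+1 : ℝ)) * f y) atTop (𝓝 ((1-0) * f y)) :=
      (tendsto_const_nhds.sub h1).mul tendsto_const_nhds
    have hB : Tendsto (fun j : ℕ => (1/(j+1 : ℝ)) * C) atTop (𝓝 (0 * C)) :=
      h1.mul tendsto_const_nhds
    simpa using hA.add hB
  refine le_of_tendsto_of_tendsto hflim hrlim (Eventually.of_forall fun j => ?_)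
  have hj1 : (0:ℝ) < (j:ℝ) + 1 := by positivity
  set lam : ℝ := 1/(j+1 : ℝ) with hlam
  have hlam0 : 0 < lam := by positivity
  have hlam1 : lam ≤ 1 := by
    rw [hlam, div_le_one hj1]; linarith [Nat.cast_nonneg (α := ℝ) j]
  have hT : (0:ℝ) ≤ s * (j+1) := by positivity
  have hcomb := hfc.2 (Set.mem_univ y) (Set.mem_univ (a + (s * (j+1)) • u))
    (by linarith : (0:ℝ) ≤ 1 - lam) (le_of_lt hlam0) (by ring)
  have hpt : (1 - lam) • y + lam • (a + (s * (j+1)) • u)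
      = (y + s • u) + lam • (a - y) := by
    rw [smul_add, smul_smul, smul_sub]
    rw [show lam * (s * (j+1)) = s by rw [hlam]; field_simp]
    rw [sub_smul, one_smul]
    abel
  rw [hpt] at hcomb
  calc f ((y + s • u) + lam • (a - y)) ≤ (1 - lam) * f y + lam * f (a + (s * (j+1)) • u) := by
        simpa using hcomb
    _ ≤ (1 - lam) * f y + lam * C := by
        have := hb (s * (j+1)) hT
        nlinarith

lemma const_of_midpoint_affine_nonpos {E : Type*} [AddCommGroup E] [Module ℝ E] (A : E → ℝ)
    (hle : ∀ y, A y ≤ 0) (hmid : ∀ p q : E, 2 * A ((1/2 : ℝ) • (p + q)) = A p + A q) :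
    ∀ y z : E, A y = A z := by
  have key : ∀ y z : E, A z ≤ A y := by
    intro y z
    by_contra hlt
    push_neg at hlt
    set Δ : ℝ := A z - A y with hΔ
    have hΔ0 : 0 < Δ := by simp [hΔ]; linarith
    -- doubling sequence
    let w : ℕ → E := fun j => Nat.rec z (fun _ wj => (2:ℝ) • wj - y) j
    have hw0 : w 0 = z := rfl
    have hwS : ∀ j, w (j+1) = (2:ℝ) • w j - y := fun j => rfl
    have hval : ∀ j, A (w j) = A z + ((2:ℝ)^j - 1) * Δ := by
      intro j
      induction j with
      | zero => simp [hw0]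
      | succ j ih =>
        have hmj := hmid (w (j+1)) y
        have harg : (1/2 : ℝ) • (w (j+1) + y) = w j := by
          rw [hwS j]
          rw [sub_add_cancel, smul_smul]
          norm_num
        rw [harg] at hmj
        have : A (w (j+1)) = 2 * A (w j) - A y := by linarith
        rw [this, ih]
        have h2 : (2:ℝ)^(j+1) = 2 * (2:ℝ)^j := by ring
        rw [h2, hΔ]
        ring
    obtain ⟨j, hj⟩ := pow_unbounded_of_one_lt ((Δ - A z) / Δ) (by norm_num : (1:ℝ) < 2)
    have hgt : (Δ - A z) < (2:ℝ)^j * Δ := by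
      rw [div_lt_iff₀ hΔ0] at hj
      linarith
    have := hval j
    have hA := hle (w j)
    nlinarith [this, hA]
  intro y z
  exact le_antisymm (key z y) (key y z)

lemma exists_clearing_shift {ι : Type*} (S : Finset ι) (φ ψ : ι → ℝ)
    (h : ∀ i ∈ S, ψ i < 0) :
    ∃ s : ℝ, 0 ≤ s ∧ ∀ i ∈ S, φ i + s * ψ i ≤ 0 := by
  classical
  induction S using Finset.induction_on with
  | empty => exact ⟨0, le_refl _, by simp⟩
  | @insert a S hna ih =>
    obtain ⟨s', hs'0, hs'⟩ := ih (fun i hi => h i (Finset.mem_insert_of_mem hi))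
    have hψa : ψ a < 0 := h a (Finset.mem_insert_self a S)
    refine ⟨max s' (max 0 (φ a / (-ψ a))), le_trans hs'0 (le_max_left _ _), ?_⟩
    intro i hi
    rcases Finset.mem_insert.mp hi with rfl | hiS
    · have hs : φ i / (-ψ i) ≤ max s' (max 0 (φ i / (-ψ i))) :=
        le_trans (le_max_right _ _) (le_max_right _ _)
      have hpos : 0 < -ψ i := by linarith
      rw [div_le_iff₀ hpos] at hs
      nlinarith
    · have hs : s' ≤ max s' (max 0 (φ a / (-ψ a))) := le_max_left _ _
      have := hs' i hiS
      nlinarith [h i (Finset.mem_insert_of_mem hiS)]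
set_option maxHeartbeats 1000000 in
lemma no_bad_seq {n m : ℕ}
    (pf : MvPolynomial (Fin n) ℝ) (pg : Fin m → MvPolynomial (Fin n) ℝ)
    (f : (Fin n → ℝ) → ℝ) (g : Fin m → (Fin n → ℝ) → ℝ)
    (hf : ∀ x, f x = MvPolynomial.eval x pf)
    (hg : ∀ i x, g i x = MvPolynomial.eval x (pg i))
    (hfc : ConvexOn ℝ Set.univ f) (hgc : ∀ i, ConvexOn ℝ Set.univ (g i))
    (xs : Fin n → ℝ) (hxs0 : ∀ i, g i xs ≤ 0)
    (hmin : ∀ x, (∀ i, g i x ≤ 0) → f xs ≤ f x)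
    (ε : ℝ) (hε : 0 < ε) :
    ∀ (d : ℕ) (V : Submodule ℝ (Fin n → ℝ)), Module.finrank ℝ V ≤ d →
    ∀ (J : Finset (Fin m))
      (_ : ∀ x, (∀ i ∈ J, g i x ≤ 0) → ∃ x', f x' = f x ∧ ∀ i, g i x' ≤ 0)
      (x : ℕ → Fin n → ℝ),
      (∀ k, x k - xs ∈ V) → (∀ k, ∀ i ∈ J, g i (x k) ≤ 1/(k+1 : ℝ)) →
      (∀ k, f (x k) ≤ f xs - ε) → False := by
  classical
  have hcf : Continuous f := by
    have hfe : f = fun x => MvPolynomial.eval x pf := funext hf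
    rw [hfe]; exact MvPolynomial.continuous_eval pf
  have hcg : ∀ i, Continuous (g i) := by
    intro i
    have hge : g i = fun x => MvPolynomial.eval x (pg i) := funext (hg i)
    rw [hge]; exact MvPolynomial.continuous_eval (pg i)
  intro d
  induction d with
  | zero =>
    intro V hV J _ x hxV _ hxf
    have hV0 : V = ⊥ := Submodule.finrank_eq_zero.mp (Nat.le_zero.mp hV)
    have hx0 : x 0 - xs = 0 := by
      have := hxV 0
      rwa [hV0, Submodule.mem_bot] at this
    have hx0' : x 0 = xs := sub_eq_zero.mp hx0
    have := hxf 0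
    rw [hx0'] at this
    linarith
  | succ d ih =>
    intro V hV J R x hxV hxg hxf
    by_cases hbd : ∃ M : ℝ, {k : ℕ | ‖x k - xs‖ ≤ M}.Infinite
    · -- bounded case: convergent subsequence, limit contradicts minimality
      obtain ⟨M, hM⟩ := hbd
      have hfreq : ∃ᶠ k in atTop, ‖x k - xs‖ ≤ M := Nat.frequently_atTop_iff_infinite.mpr hM
      obtain ⟨φ, hφmono, hφ⟩ := Filter.extraction_of_frequently_atTop hfreq
      have hmem : ∀ j, x (φ j) ∈ Metric.closedBall xs M := by
        intro j; rw [Metric.mem_closedBall, dist_eq_norm]; exact hφ j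
      obtain ⟨xb, _, ψ, hψmono, hψtend⟩ :=
        (isCompact_closedBall xs M).tendsto_subseq hmem
      have hidx : ∀ j : ℕ, (j : ℝ) ≤ (φ (ψ j) : ℝ) := by
        intro j
        exact_mod_cast le_trans hψmono.le_apply hφmono.le_apply
      have hgb : ∀ i ∈ J, g i xb ≤ 0 := by
        intro i hi
        have h1 : Tendsto (fun j => g i (x (φ (ψ j)))) atTop (𝓝 (g i xb)) :=
          ((hcg i).tendsto xb).comp hψtend
        refine le_of_tendsto_of_tendsto h1 tendsto_one_div_add_atTop_nhds_zero_nat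
          (Eventually.of_forall fun j => ?_)
        refine le_trans (hxg _ i hi) ?_
        apply one_div_le_one_div_of_le (by positivity)
        linarith [hidx j]
      have hfb : f xb ≤ f xs - ε :=
        le_of_tendsto ((hcf.tendsto xb).comp hψtend) (Eventually.of_forall fun j => hxf _)
      obtain ⟨x', hx'f, hx'g⟩ := R xb hgb
      have := hmin x' hx'g
      rw [hx'f] at this
      linarith
    · -- unbounded case
      push_neg at hbd
      have htend : Tendsto (fun k => ‖x k - xs‖) atTop atTop := by
        rw [tendsto_atTop]
        intro b
        have hfin : {k : ℕ | ‖x k - xs‖ ≤ b}.Finite := hbd b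
        have h1 := hfin.eventually_cofinite_notMem
        rw [Nat.cofinite_eq_atTop] at h1
        exact h1.mono fun k hk => le_of_lt (lt_of_not_ge hk)
      have hpos : ∀ᶠ k in atTop, 0 < ‖x k - xs‖ := htend.eventually (eventually_gt_atTop 0)
      rw [eventually_atTop] at hpos
      obtain ⟨k₀, hk₀⟩ := hpos
      have hwmem : ∀ j, (‖x (j + k₀) - xs‖)⁻¹ • (x (j + k₀) - xs)
          ∈ Metric.sphere (0 : Fin n → ℝ) 1 := by
        intro j
        rw [mem_sphere_zero_iff_norm]
        have hpos' := hk₀ (j + k₀) (Nat.le_add_left _ _)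
        rw [norm_smul, norm_inv, norm_norm]
        field_simp
      obtain ⟨u, hu, ψ, hψmono, hψtend⟩ :=
        (isCompact_sphere (0 : Fin n → ℝ) 1).tendsto_subseq hwmem
      have hunorm : ‖u‖ = 1 := mem_sphere_zero_iff_norm.mp hu
      have hune : u ≠ 0 := by
        intro h; rw [h, norm_zero] at hunorm; norm_num at hunorm
      set σ : ℕ → ℕ := fun j => ψ j + k₀ with hσ
      have hσge : ∀ j, j ≤ σ j := fun j => le_trans hψmono.le_apply (Nat.le_add_right _ _)
      set X : ℕ → (Fin n → ℝ) := fun j => x (σ j) with hX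
      set T : ℕ → ℝ := fun j => ‖X j - xs‖ with hT
      have hTpos : ∀ j, 0 < T j := fun j => hk₀ (σ j) (Nat.le_add_left _ _)
      have hTtend : Tendsto T atTop atTop := by
        have hσmono : StrictMono σ := fun a b hab => by
          simp only [hσ]; exact Nat.add_lt_add_right (hψmono hab) k₀
        exact htend.comp hσmono.tendsto_atTop
      have hwtend : Tendsto (fun j => (T j)⁻¹ • (X j - xs)) atTop (𝓝 u) := hψtend
      have huV : u ∈ V := by
        have hclosed : IsClosed (V : Set (Fin n → ℝ)) := Submodule.closed_of_finiteDimensional V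
        exact hclosed.mem_of_tendsto hwtend
          (Eventually.of_forall fun j => V.smul_mem _ (hxV (σ j)))
      have hXg : ∀ j, ∀ i ∈ J, g i (X j) ≤ 1/((j : ℝ)+1) := by
        intro j i hi
        refine le_trans (hxg (σ j) i hi) ?_
        apply one_div_le_one_div_of_le (by positivity)
        have : (j : ℝ) ≤ (σ j : ℝ) := by exact_mod_cast hσge j
        linarith
      have hXf : ∀ j, f (X j) ≤ f xs - ε := fun j => hxf _
      -- ray bounds
      have hray : ∀ t : ℝ, 0 ≤ t →
          (∀ i ∈ J, g i (xs + t • u) ≤ 0) ∧ f (xs + t • u) ≤ f xs := by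
        intro t ht
        have hTev : ∀ᶠ j in atTop, t ≤ T j := hTtend.eventually (eventually_ge_atTop t)
        have hzt : Tendsto (fun j => xs + t • ((T j)⁻¹ • (X j - xs))) atTop
            (𝓝 (xs + t • u)) := tendsto_const_nhds.add (hwtend.const_smul t)
        have hcomb : ∀ j, t ≤ T j →
            (∀ i ∈ J, g i (xs + t • ((T j)⁻¹ • (X j - xs)))
              ≤ (1 - t/(T j)) * g i xs + (t/(T j)) * g i (X j)) ∧
            f (xs + t • ((T j)⁻¹ • (X j - xs)))
              ≤ (1 - t/(T j)) * f xs + (t/(T j)) * f (X j) := by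
          intro j htj
          have hTj := hTpos j
          have hTj' : T j ≠ 0 := ne_of_gt hTj
          have hlam0 : 0 ≤ t/(T j) := by positivity
          have hlam1 : t/(T j) ≤ 1 := by rw [div_le_one hTj]; exact htj
          have hpt : xs + t • ((T j)⁻¹ • (X j - xs))
              = (1 - t/(T j)) • xs + (t/(T j)) • (X j) := by
            rw [div_eq_mul_inv]
            match_scalars
            · field_simp; ring
            · field_simp
          constructor
          · intro i hi
            rw [hpt]
            have hcv : g i ((1 - t/(T j)) • xs + (t/(T j)) • (X j))
                ≤ (1 - t/(T j)) • g i xs + (t/(T j)) • g i (X j) :=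
              (hgc i).2 (Set.mem_univ xs) (Set.mem_univ (X j)) (by linarith) hlam0 (by ring)
            simpa using hcv
          · rw [hpt]
            have hcv : f ((1 - t/(T j)) • xs + (t/(T j)) • (X j))
                ≤ (1 - t/(T j)) • f xs + (t/(T j)) • f (X j) :=
              hfc.2 (Set.mem_univ xs) (Set.mem_univ (X j)) (by linarith) hlam0 (by ring)
            simpa using hcv
        constructor
        · intro i hi
          have h1 : Tendsto (fun j => g i (xs + t • ((T j)⁻¹ • (X j - xs)))) atTop
              (𝓝 (g i (xs + t • u))) := ((hcg i).tendsto _).comp hzt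
          refine le_of_tendsto_of_tendsto h1 tendsto_one_div_add_atTop_nhds_zero_nat
            (hTev.mono fun j htj => ?_)
          have hTj := hTpos j
          have hlam0 : 0 ≤ t/(T j) := by positivity
          have hlam1 : t/(T j) ≤ 1 := by rw [div_le_one hTj]; exact htj
          have h2 := (hcomb j htj).1 i hi
          have h3 : (1 - t/(T j)) * g i xs ≤ 0 :=
            mul_nonpos_of_nonneg_of_nonpos (by linarith) (hxs0 i)
          have h4 : (t/(T j)) * g i (X j) ≤ (t/(T j)) * (1/((j : ℝ)+1)) :=
            mul_le_mul_of_nonneg_left (hXg j i hi) hlam0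
          have h5 : (t/(T j)) * (1/((j : ℝ)+1)) ≤ 1 * (1/((j : ℝ)+1)) :=
            mul_le_mul_of_nonneg_right hlam1 (by positivity)
          simp only [one_mul] at h5
          linarith
        · have h1 : Tendsto (fun j => f (xs + t • ((T j)⁻¹ • (X j - xs)))) atTop
              (𝓝 (f (xs + t • u))) := (hcf.tendsto _).comp hzt
          refine le_of_tendsto h1 (hTev.mono fun j htj => ?_)
          have hTj := hTpos j
          have hlam0 : 0 ≤ t/(T j) := by positivity
          have h2 := (hcomb j htj).2
          have h3 := hXf j
          nlinarith
      -- f equals f xs on the ray, hence on the whole line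
      have hrayf : ∀ t : ℝ, 0 ≤ t → f (xs + t • u) = f xs := by
        intro t ht
        refine le_antisymm ((hray t ht).2) ?_
        obtain ⟨x', hx'f, hx'g⟩ := R (xs + t • u) ((hray t ht).1)
        have := hmin x' hx'g
        rwa [hx'f] at this
      have hlinef : ∀ t : ℝ, f (xs + t • u) = f xs := by
        obtain ⟨P, hP⟩ := exists_line_poly pf xs u
        have hPf : ∀ t, P.eval t = f (xs + t • u) := fun t => by rw [hP, ← hf]
        have hsub : Set.Ici (0:ℝ) ⊆ {t | P.eval t = Polynomial.eval t (Polynomial.C (f xs))} := by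
          intro t ht
          simp only [Set.mem_setOf_eq, Polynomial.eval_C]
          rw [hPf]; exact hrayf t ht
        have hPQ : P = Polynomial.C (f xs) :=
          Polynomial.eq_of_infinite_eval_eq _ _ ((Set.Ici_infinite 0).mono hsub)
        intro t
        rw [← hPf, hPQ, Polynomial.eval_C]
      -- f is invariant along u
      have hfu : ∀ (y : Fin n → ℝ) (t : ℝ), f (y + t • u) = f y := by
        have hup : ∀ (y : Fin n → ℝ) (s : ℝ), 0 ≤ s → f (y + s • u) ≤ f y :=
          ray_mono hfc hcf xs u (f xs) (fun t _ => le_of_eq (hlinef t))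
        have hdown : ∀ (y : Fin n → ℝ) (s : ℝ), 0 ≤ s → f (y + s • (-u)) ≤ f y :=
          ray_mono hfc hcf xs (-u) (f xs) (fun t _ => by
            rw [show xs + t • (-u) = xs + (-t) • u by module]
            exact le_of_eq (hlinef (-t)))
        have hboth : ∀ (y : Fin n → ℝ) (s : ℝ), 0 ≤ s → f (y + s • u) = f y := by
          intro y s hs
          refine le_antisymm (hup y s hs) ?_
          have := hdown (y + s • u) s hs
          rwa [show y + s • u + s • (-u) = y by module] at this
        intro y t
        rcases le_or_gt 0 t with ht | ht
        · exact hboth y t ht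
        · have := hboth (y + t • u) (-t) (by linarith)
          rw [show y + t • u + (-t) • u = y by module] at this
          exact this.symm
      -- g slope structure for i ∈ J
      have hgmono : ∀ i ∈ J, ∀ (y : Fin n → ℝ) (s : ℝ), 0 ≤ s → g i (y + s • u) ≤ g i y :=
        fun i hi => ray_mono (hgc i) (hcg i) xs u 0 (fun t ht => (hray t ht).1 i hi)
      have haff : ∀ i ∈ J, ∀ (y : Fin n → ℝ) (t : ℝ),
          g i (y + t • u) = g i y + t * (g i (y + u) - g i y) := by
        intro i hi y t
        obtain ⟨P, hP⟩ := exists_line_poly (pg i) y u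
        have hPg : ∀ t, P.eval t = g i (y + t • u) := fun t => by rw [hP, ← hg]
        have hPc : ConvexOn ℝ Set.univ (fun t => P.eval t) := by
          have h1 := convexOn_line (hgc i) y u
          have h2 : (fun t : ℝ => P.eval t) = fun t : ℝ => g i (y + t • u) := funext hPg
          rw [h2]; exact h1
        have hQ := poly_affine_of_convex_bddAbove P hPc (g i y)
          (fun s hs => by rw [hPg]; exact hgmono i hi y s hs)
        have h0 : P.eval 0 = g i y := by rw [hPg, zero_smul, add_zero]
        have h1 : P.eval 1 = g i (y + u) := by rw [hPg, one_smul]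
        have hQt := hQ t
        rw [h0, h1] at hQt
        rw [← hPg t, hQt]
        ring
      -- slope is a constant for each i ∈ J
      have hslope_const : ∀ i ∈ J, ∀ y : Fin n → ℝ,
          g i (y + u) - g i y = g i (xs + u) - g i xs := by
        intro i hi
        have hle : ∀ y : Fin n → ℝ, g i (y + u) - g i y ≤ 0 := by
          intro y
          have := hgmono i hi y 1 zero_le_one
          rw [one_smul] at this
          linarith
        have hmid : ∀ p q : Fin n → ℝ,
            2 * (g i ((1/2 : ℝ) • (p + q) + u) - g i ((1/2 : ℝ) • (p + q)))
              = (g i (p + u) - g i p) + (g i (q + u) - g i q) := by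
          intro p q
          have hcvx : ∀ t : ℝ, g i ((1/2 : ℝ) • (p + q) + t • u)
              ≤ (1/2 : ℝ) * g i (p + t • u) + (1/2 : ℝ) * g i (q + t • u) := by
            intro t
            have hpt : (1/2 : ℝ) • (p + t • u) + (1/2 : ℝ) • (q + t • u)
                = (1/2 : ℝ) • (p + q) + t • u := by module
            have hcv : g i ((1/2 : ℝ) • (p + t • u) + (1/2 : ℝ) • (q + t • u))
                ≤ (1/2 : ℝ) • g i (p + t • u) + (1/2 : ℝ) • g i (q + t • u) :=
              (hgc i).2 (Set.mem_univ (p + t • u)) (Set.mem_univ (q + t • u))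
                (by norm_num) (by norm_num) (by norm_num)
            rw [hpt] at hcv
            simpa using hcv
          have haffall : ∀ t : ℝ,
              (g i ((1/2 : ℝ) • (p + q) + u) - g i ((1/2 : ℝ) • (p + q))) * t
                  + g i ((1/2 : ℝ) • (p + q))
              ≤ (((g i (p + u) - g i p) + (g i (q + u) - g i q))/2) * t
                  + (g i p + g i q)/2 := by
            intro t
            have h1 := hcvx t
            rw [haff i hi ((1/2 : ℝ) • (p + q)) t, haff i hi p t, haff i hi q t] at h1
            linarith
          have := slope_eq_of_affine_le haffall
          linarith
        intro y
        exact const_of_midpoint_affine_nonpos (fun y => g i (y + u) - g i y) hle hmid y xs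
      set α : Fin m → ℝ := fun i => g i (xs + u) - g i xs with hα
      have hkey : ∀ i ∈ J, ∀ (y : Fin n → ℝ) (t : ℝ), g i (y + t • u) = g i y + t * α i := by
        intro i hi y t
        rw [haff i hi y t, hslope_const i hi y]
      have hαle : ∀ i ∈ J, α i ≤ 0 := by
        intro i hi
        have := hgmono i hi xs 1 zero_le_one
        rw [one_smul] at this
        simp only [hα]
        linarith
      set J' : Finset (Fin m) := J.filter (fun i => α i = 0) with hJ'
      -- new repair property
      have R' : ∀ xx, (∀ i ∈ J', g i xx ≤ 0) → ∃ x', f x' = f xx ∧ ∀ i, g i x' ≤ 0 := by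
        intro xx hxx
        obtain ⟨s, hs0, hs⟩ := exists_clearing_shift (J.filter (fun i => ¬(α i = 0)))
          (fun i => g i xx) α
          (fun i hi => lt_of_le_of_ne (hαle i (Finset.mem_of_mem_filter i hi))
            ((Finset.mem_filter.mp hi).2))
        obtain ⟨x', hx'f, hx'g⟩ := R (xx + s • u) (by
          intro i hi
          rw [hkey i hi]
          by_cases hzi : α i = 0
          · rw [hzi, mul_zero, add_zero]
            exact hxx i (Finset.mem_filter.mpr ⟨hi, hzi⟩)
          · have := hs i (Finset.mem_filter.mpr ⟨hi, hzi⟩)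
            linarith)
        refine ⟨x', ?_, hx'g⟩
        rw [hx'f, hfu]
      -- projection functional
      obtain ⟨c, hc⟩ : ∃ c, u c ≠ 0 := by
        by_contra h
        push_neg at h
        exact hune (funext h)
      set ℓ : (Fin n → ℝ) →ₗ[ℝ] ℝ := (u c)⁻¹ • (LinearMap.proj c) with hℓ
      have hℓu : ℓ u = 1 := by
        simp only [hℓ, LinearMap.smul_apply, LinearMap.proj_apply, smul_eq_mul]
        field_simp
      set W : Submodule ℝ (Fin n → ℝ) := V ⊓ LinearMap.ker ℓ with hW
      have hWV : W < V := by
        refine lt_of_le_of_ne inf_le_left (fun h => ?_)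
        have huW : u ∈ W := h ▸ huV
        have : ℓ u = 0 := (Submodule.mem_inf.mp huW).2
        rw [hℓu] at this
        norm_num at this
      have hWrank : Module.finrank ℝ W ≤ d := by
        have h1 : Module.finrank ℝ W < Module.finrank ℝ V :=
          Submodule.finrank_lt_finrank_of_lt hWV
        omega
      -- projected sequence
      refine ih W hWrank J' R' (fun k => X k + (-(ℓ (X k - xs))) • u) ?_ ?_ ?_
      · intro k
        rw [Submodule.mem_inf]
        constructor
        · have h1 : X k + (-(ℓ (X k - xs))) • u - xs
              = (X k - xs) + (-(ℓ (X k - xs))) • u := by module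
          rw [h1]
          exact V.add_mem (hxV (σ k)) (V.smul_mem _ huV)
        · rw [LinearMap.mem_ker]
          have h1 : X k + (-(ℓ (X k - xs))) • u - xs
              = (X k - xs) + (-(ℓ (X k - xs))) • u := by module
          rw [h1, map_add, map_smul, hℓu, smul_eq_mul, mul_one]
          ring
      · intro k i hi
        have hiJ : i ∈ J := Finset.mem_of_mem_filter i hi
        have hiα : α i = 0 := (Finset.mem_filter.mp hi).2
        rw [hkey i hiJ, hiα, mul_zero, add_zero]
        exact hxg (σ k) i hiJ |>.trans (by
          apply one_div_le_one_div_of_le (by positivity)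
          have : (k : ℝ) ≤ (σ k : ℝ) := by exact_mod_cast hσge k
          linarith)
      · intro k
        rw [hfu]
        exact hXf k

/-- Positivity of `f + ε - f(x*)` persists on a slightly enlarged feasible set `K_δ`. -/
theorem convex_poly_positivity_on_enlarged_set {n m : ℕ}
    (pf : MvPolynomial (Fin n) ℝ) (pg : Fin m → MvPolynomial (Fin n) ℝ)
    (f : (Fin n → ℝ) → ℝ) (g : Fin m → (Fin n → ℝ) → ℝ)
    (hf : ∀ x, f x = MvPolynomial.eval x pf)
    (hg : ∀ i x, g i x = MvPolynomial.eval x (pg i))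
    (hfc : ConvexOn ℝ Set.univ f) (hgc : ∀ i, ConvexOn ℝ Set.univ (g i))
    (K : Set (Fin n → ℝ)) (hK : K = {x | ∀ i, g i x ≤ 0})
    (xs : Fin n → ℝ) (hxs : xs ∈ K) (hmin : ∀ x ∈ K, f xs ≤ f x)
    (ε : ℝ) (hε : 0 < ε) :
    ∃ δ > (0 : ℝ), ∀ x : Fin n → ℝ, (∀ i, g i x ≤ δ) → 0 < f x + ε - f xs := by
  subst hK
  have hxs0 : ∀ i, g i xs ≤ 0 := hxs
  have hmin' : ∀ x, (∀ i, g i x ≤ 0) → f xs ≤ f x := fun x hx => hmin x hx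
  by_contra hcon
  push_neg at hcon
  choose! xseq hx1 hx2 using fun k : ℕ => hcon (1/((k:ℝ)+1)) (by positivity)
  exact no_bad_seq pf pg f g hf hg hfc hgc xs hxs0 hmin' ε hε
    (Module.finrank ℝ (⊤ : Submodule ℝ (Fin n → ℝ))) ⊤ le_rfl Finset.univ
    (fun x hx => ⟨x, rfl, fun i => hx i (Finset.mem_univ i)⟩) xseq
    (fun _ => Submodule.mem_top) (fun k i _ => hx1 k i) (fun k => by linarith [hx2 k])
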